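/- Let σ ∈ Aₙ be a product of r pairwise disjoint cycles of lengths k₁,…,k_r (each kᵢ ≥ 2) with k₁ + ⋯ + k_r = n. Then σ⁻¹ can be written as a product of exactly (n+r)/2 three-cycles in S_{n+1}, each containing the outsider x = n+1. -/

import Mathlib

open Equiv Equiv.Perm

variable {α : Type*} [DecidableEq α]

private lemma myFormPerm_map (f : Equiv.Perm α) : ∀ (l : List α),
    List.formPerm (l.map f) = f * l.formPerm * f⁻¹
  | [] => by simp
  | [a] => by simp
  | a :: b :: l => by
    simp only [List.map_cons, List.formPerm_cons_cons]
    have ih := myFormPerm_map f (b :: l)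
    simp only [List.map_cons] at ih
    rw [ih, Equiv.swap_apply_apply]
    group

private lemma myStep (x b : α) (l : List α) (hb : b ∉ x :: l) :
    List.formPerm (x :: (l ++ [b])) = Equiv.swap x b * List.formPerm (x :: l) := by
  rcases eq_or_ne l [] with rfl | hl
  · simp [List.formPerm_pair]
  · obtain ⟨l', a, rfl⟩ := l.eq_nil_or_concat.resolve_left hl
    simp only [List.concat_eq_append] at hb ⊢
    have h1 : List.formPerm (x :: (l' ++ [a] ++ [b]))
        = List.formPerm (x :: (l' ++ [a])) * Equiv.swap a b := by
      have := List.formPerm_append_pair (x :: l') a b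
      simpa [List.append_assoc] using this
    have h2 : Equiv.swap x b = List.formPerm (x :: (l' ++ [a])) * Equiv.swap a b *
        (List.formPerm (x :: (l' ++ [a])))⁻¹ := by
      rw [← Equiv.swap_apply_apply, List.formPerm_cons_concat_apply_last,
        List.formPerm_apply_of_notMem hb]
    rw [h1, h2]
    group

private lemma mySwapProd (x : α) (l : List α) (h : (x :: l).Nodup) :
    (l.reverse.map (fun a => Equiv.swap x a)).prod = List.formPerm (x :: l) := by
  induction l using List.reverseRecOn with
  | nil => simp
  | append_singleton l b ih =>
    rw [show x :: (l ++ [b]) = (x :: l) ++ [b] by simp, List.nodup_append] at h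
    have hb : b ∉ x :: l := fun hmem => h.2.2 b hmem b (List.mem_singleton_self b) rfl
    rw [List.reverse_append, List.reverse_singleton, List.singleton_append, List.map_cons,
      List.prod_cons, ih h.1, myStep x b l hb]

private lemma myConj (x a : α) (t : List α) (hx : x ∉ a :: t) (ha : a ∉ t) :
    Equiv.swap x a * List.formPerm (x :: t) * Equiv.swap x a = List.formPerm (a :: t) := by
  have h1 : Equiv.swap x a * List.formPerm (x :: t) * Equiv.swap x a
      = Equiv.swap x a * List.formPerm (x :: t) * (Equiv.swap x a)⁻¹ := by
    rw [Equiv.swap_inv]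
  rw [h1, ← myFormPerm_map]
  have hmap : t.map (Equiv.swap x a) = t := by
    conv_rhs => rw [← List.map_id t]
    refine List.map_congr_left fun y hy => ?_
    have hyx : y ≠ x := fun h => hx (h ▸ List.mem_cons_of_mem a hy)
    have hya : y ≠ a := fun h => ha (h ▸ hy)
    simp [Equiv.swap_apply_of_ne_of_ne hyx hya]
  rw [List.map_cons, Equiv.swap_apply_left, hmap]

private lemma myCycleList [Fintype α] (x : α) (c : Equiv.Perm α) (hc : c.IsCycle)
    (hx : c x = x) :
    ∃ L : List α, (∀ a ∈ L, a ∈ c.support) ∧ L.Chain' (· ≠ ·) ∧ L ≠ [] ∧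
      L.length = c.support.card + 1 ∧ (L.map (fun a => Equiv.swap x a)).prod = c := by
  obtain ⟨a, ha, -⟩ := id hc
  have hform : (c.toList a).formPerm = c := by
    rw [Equiv.Perm.formPerm_toList, (id hc).cycleOf_eq ha]
  have hnd : (c.toList a).Nodup := Equiv.Perm.nodup_toList c a
  have hmem : a ∈ c.support := Equiv.Perm.mem_support.2 ha
  have hlen2 : 2 ≤ (c.toList a).length :=
    Equiv.Perm.two_le_length_toList_iff_mem_support.2 hmem
  have hsupp : c.support = (c.toList a).toFinset := by
    conv_lhs => rw [← hform]
    exact List.support_formPerm_of_nodup _ hnd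
      (fun y hy => by rw [hy] at hlen2; simp at hlen2)
  have hxnot : x ∉ c.toList a := by
    intro hxm
    have : x ∈ c.support := hsupp ▸ List.mem_toFinset.2 hxm
    exact (Equiv.Perm.mem_support.1 this) hx
  obtain ⟨a₀, t, ht⟩ : ∃ a₀ t, c.toList a = a₀ :: t := by
    cases h : c.toList a with
    | nil => rw [h] at hlen2; simp at hlen2
    | cons y l => exact ⟨y, l, rfl⟩
  obtain ⟨b, t'', ht'⟩ : ∃ b t'', t = b :: t'' := by
    cases h : t with
    | nil => rw [ht, h] at hlen2; simp at hlen2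
    | cons y l => exact ⟨y, l, rfl⟩
  subst ht'
  rw [ht] at hform hnd hxnot hsupp hlen2
  refine ⟨a₀ :: ((b :: t'').reverse ++ [a₀]), ?_, ?_, by simp, ?_, ?_⟩
  · intro y hy
    rw [hsupp]
    apply List.mem_toFinset.2
    rcases List.mem_cons.1 hy with rfl | hy'
    · exact List.mem_cons_self
    · rcases List.mem_append.1 hy' with hy'' | hy''
      · exact List.mem_cons_of_mem _ (List.mem_reverse.1 hy'')
      · rw [List.mem_singleton.1 hy'']; exact List.mem_cons_self
  · -- Chain'
    have hnd' : (a₀ :: (b :: t'').reverse).Nodup := by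
      rw [List.nodup_cons] at hnd ⊢
      exact ⟨fun h => hnd.1 (List.mem_reverse.1 h), List.nodup_reverse.mpr hnd.2⟩
    rw [show a₀ :: ((b :: t'').reverse ++ [a₀]) = (a₀ :: (b :: t'').reverse) ++ [a₀] by simp,
      List.Chain', List.isChain_append]
    refine ⟨List.Pairwise.isChain hnd', List.isChain_singleton a₀, ?_⟩
    intro y hy z hz
    rw [List.head?_cons, Option.mem_some_iff] at hz
    subst hz
    have : (a₀ :: (b :: t'').reverse).getLast? = some b := by
      rw [show a₀ :: (b :: t'').reverse = (a₀ :: t''.reverse) ++ [b] by simp,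
        List.getLast?_append_of_ne_nil _ (by simp)]
      rfl
    rw [this, Option.mem_some_iff] at hy
    subst hy
    rw [List.nodup_cons] at hnd
    exact fun h => hnd.1 (h ▸ List.mem_cons_self)
  · have hlen : (c.toList a).length = c.support.card := by
      rw [Equiv.Perm.length_toList, hc.cycleOf_eq ha]
    rw [ht] at hlen
    simp at hlen ⊢
    omega
  · have hx1 : x ∉ a₀ :: b :: t'' := hxnot
    have hx2 : (x :: b :: t'').Nodup := by
      rw [List.nodup_cons] at hnd ⊢
      exact ⟨fun h => hxnot (List.mem_cons_of_mem _ h), hnd.2⟩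
    have ha₀ : a₀ ∉ b :: t'' := (List.nodup_cons.1 hnd).1
    rw [List.map_cons, List.prod_cons, List.map_append, List.prod_append]
    rw [mySwapProd x (b :: t'') hx2]
    simp only [List.map_singleton, List.prod_singleton]
    rw [← mul_assoc, myConj x a₀ (b :: t'') hx1 ha₀, hform]

private lemma myMain [Fintype α] (x : α) (τ : Equiv.Perm α) (hfix : τ x = x) :
    ∃ L : List α, (∀ a ∈ L, a ∈ τ.support) ∧ L.Chain' (· ≠ ·) ∧
      L.length = τ.support.card + Multiset.card τ.cycleType ∧
      (L.map (fun a => Equiv.swap x a)).prod = τ := by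
  revert hfix
  induction τ using Equiv.Perm.cycle_induction_on with
  | base_one => exact fun _ => ⟨[], by simp, List.isChain_nil, by simp, by simp⟩
  | base_cycles c hc =>
    intro hfix
    obtain ⟨L, h1, h2, _, h4, h5⟩ := myCycleList x c hc hfix
    exact ⟨L, h1, h2, by rw [h4, hc.cycleType]; simp, h5⟩
  | induction_disjoint σ τ hd hσc ihσ ihτ =>
    intro hfix
    have hστ : σ x = x ∧ τ x = x := by
      rcases hd x with h | h
      · have : σ (τ x) = x := hfix
        exact ⟨h, σ.injective (by rw [this, h])⟩
      · have : σ (τ x) = x := hfix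
        rw [h] at this
        exact ⟨this, h⟩
    obtain ⟨Lσ, hσ1, hσ2, hσ3, hσ4⟩ := ihσ hστ.1
    obtain ⟨Lτ, hτ1, hτ2, hτ3, hτ4⟩ := ihτ hστ.2
    have hdsupp : _root_.Disjoint σ.support τ.support :=
      Equiv.Perm.disjoint_iff_disjoint_support.1 hd
    refine ⟨Lσ ++ Lτ, ?_, ?_, ?_, ?_⟩
    · intro a ha
      rw [hd.support_mul, Finset.mem_union]
      rcases List.mem_append.1 ha with h | h
      · exact Or.inl (hσ1 a h)
      · exact Or.inr (hτ1 a h)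
    · rw [List.Chain', List.isChain_append]
      refine ⟨hσ2, hτ2, ?_⟩
      intro y hy z hz
      have hy' : y ∈ σ.support := hσ1 y (List.mem_of_mem_getLast? hy)
      have hz' : z ∈ τ.support := hτ1 z (List.mem_of_mem_head? hz)
      intro h
      subst h
      exact Finset.disjoint_left.1 hdsupp hy' hz'
    · rw [List.length_append, hσ3, hτ3, hd.card_support_mul, hd.cycleType_mul]
      simp only [Multiset.card_add]
      ring
    · rw [List.map_append, List.prod_append, hσ4, hτ4]

private lemma myPair [Fintype α] (x : α) : ∀ (L : List α), (∀ a ∈ L, a ≠ x) →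
    L.Chain' (· ≠ ·) → Even L.length →
    ∃ cs : List (Equiv.Perm α), cs.prod = (L.map (fun a => Equiv.swap x a)).prod ∧
      cs.length = L.length / 2 ∧ ∀ c ∈ cs, c.IsCycle ∧ c.support.card = 3 ∧ x ∈ c.support
  | [] => fun _ _ _ => ⟨[], by simp, by simp, by simp⟩
  | [a] => fun _ _ h => by rw [List.length_singleton] at h; exact absurd h (by decide)
  | a :: b :: L => fun hmem hch he => by
    have hev : Even L.length := by
      obtain ⟨k, hk⟩ := he
      simp only [List.length_cons] at hk
      exact ⟨k - 1, by omega⟩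
    obtain ⟨cs, h1, h2, h3⟩ := myPair x L (fun y hy => hmem y (by simp [hy]))
      (hch.tail.tail) hev
    have hax : x ≠ a := (hmem a (by simp)).symm
    have hbx : x ≠ b := (hmem b (by simp)).symm
    have hab : a ≠ b := (List.isChain_cons_cons.1 hch).1
    have h3c : Equiv.Perm.IsThreeCycle (Equiv.swap x a * Equiv.swap x b) :=
      Equiv.Perm.isThreeCycle_swap_mul_swap_same hax hbx hab
    refine ⟨(Equiv.swap x a * Equiv.swap x b) :: cs, ?_, ?_, ?_⟩
    · rw [List.prod_cons, h1]
      simp [mul_assoc]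
    · simp only [List.length_cons, h2]
      omega
    · intro c hc
      rcases List.mem_cons.1 hc with rfl | hc'
      · refine ⟨h3c.isCycle, h3c.card_support, ?_⟩
        rw [Equiv.Perm.mem_support]
        simp only [Equiv.Perm.coe_mul, Function.comp_apply, Equiv.swap_apply_left]
        rw [Equiv.swap_apply_of_ne_of_ne hbx.symm hab.symm]
        exact hbx.symm
      · exact h3 c hc'

theorem stmt16 (n r : ℕ) (σ : Equiv.Perm (Fin (n + 1)))
    (hfix : σ (Fin.last n) = Fin.last n)
    (hsign : Equiv.Perm.sign σ = 1)
    (hsupp : σ.support.card = n)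
    (hcyc : σ.cycleType.card = r) :
    ∃ cs : List (Equiv.Perm (Fin (n + 1))),
      cs.prod = σ⁻¹ ∧ cs.length = (n + r) / 2 ∧
      ∀ c ∈ cs, c.IsCycle ∧ c.support.card = 3 ∧ Fin.last n ∈ c.support := by
  set x := Fin.last n with hx
  set τ := σ⁻¹ with hτ
  have hfix' : τ x = x := by
    rw [hτ, Equiv.Perm.inv_eq_iff_eq, hfix]
  have hsupp' : τ.support.card = n := by rw [hτ, Equiv.Perm.support_inv, hsupp]
  have hcyc' : Multiset.card τ.cycleType = r := by
    rw [hτ, Equiv.Perm.cycleType_inv, hcyc]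
  have heven : Even (n + r) := by
    have := Equiv.Perm.sign_of_cycleType σ
    rw [hsign, Equiv.Perm.sum_cycleType, hsupp, hcyc] at this
    have h2 : (-1 : ℤˣ) ≠ 1 := by decide
    exact (neg_one_pow_eq_one_iff_even h2).1 this.symm
  obtain ⟨L, hL1, hL2, hL3, hL4⟩ := myMain x τ hfix'
  rw [hsupp', hcyc'] at hL3
  have hLx : ∀ a ∈ L, a ≠ x := by
    intro a ha h
    subst h
    exact (Equiv.Perm.mem_support.1 (hL1 x ha)) hfix'
  obtain ⟨cs, hc1, hc2, hc3⟩ := myPair x L hLx hL2 (hL3 ▸ heven)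
  exact ⟨cs, by rw [hc1, hL4], by rw [hc2, hL3], hc3⟩
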